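/- For every natural number n ≥ 1, the rational-valued hypergeometric-type sum ∑_{k=0}^{2n} [(-2n)_k (-2n-1)_k (1/2)_k] / [(-2n+1/2)_k (2)_k k!] equals (2n+1)! (2n)!^3 / ((4n)! n!^3 (n+1)!), where (x)_k denotes the rising factorial (Pochhammer symbol). -/

import Mathlib

open Nat Polynomial Finset

-- abbreviations
noncomputable def tQ (n k : ℕ) : ℚ :=
  (-1)^k * (2*k)! * (4*n-2*k)! * (2*n+2)! /
    (((k)! : ℚ)^2 * (k+1)! * (((2*n-k)! : ℚ))^2 * (2*n+1-k)!)

noncomputable def HQ (n k : ℕ) : ℚ :=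
  (-1)^(k+1) * 2 * k * (4*(n:ℚ)+1-2*k) *
    (2*(n:ℚ)*k^2 + k^2 - 12*(n:ℚ)^2*k - 20*(n:ℚ)*k - 7*k + 16*(n:ℚ)^3 + 42*(n:ℚ)^2 + 32*n + 6) *
    (2*k)! * (4*n-2*k)! * (2*n+2)! /
    (((k)! : ℚ)^3 * (2*n-k)! * (2*n+2-k)! * (2*n+3-k)!)

noncomputable def WQ (n : ℕ) : ℚ :=
  ((n:ℚ)+1) * (2*n+2)! * (2*n)! / (((n+1)! : ℚ)^2 * ((n)! : ℚ)^2)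

lemma factQ_ne (m : ℕ) : ((m ! : ℕ) : ℚ) ≠ 0 := by
  exact_mod_cast Nat.factorial_ne_zero m

lemma factQ_pos (m : ℕ) : (0:ℚ) < ((m ! : ℕ) : ℚ) := by
  exact_mod_cast Nat.factorial_pos m

-- Pochhammer evaluations
lemma poch_neg (m : ℕ) : ∀ k : ℕ, k ≤ m →
    (ascPochhammer ℚ k).eval (-(m:ℚ)) = (-1)^k * (m ! : ℚ) / ((m-k)! : ℚ) := by
  intro k
  induction k with
  | zero =>
    intro _
    simp only [ascPochhammer_zero, Polynomial.eval_one, Nat.sub_zero, pow_zero, one_mul]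
    rw [div_self (factQ_ne m)]
  | succ k ih =>
    intro hk
    rw [ascPochhammer_succ_eval, ih (by omega)]
    have h1 : m - k = (m - (k+1)) + 1 := by omega
    have h2 : ((m - (k+1) : ℕ) : ℚ) = (m:ℚ) - (k:ℚ) - 1 := by
      push_cast [Nat.cast_sub (show k+1 ≤ m from hk)]; ring
    rw [h1]
    simp only [Nat.factorial_succ]
    push_cast
    have hne : ((m - (k+1))! : ℚ) ≠ 0 := factQ_ne _
    have hpos : ((m:ℚ) - (↑k+1) + 1) ≠ 0 := by
      have : (k:ℚ) < m := by exact_mod_cast hk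
      intro h; linarith [h]
    field_simp
    rw [h2]
    ring

lemma poch_half : ∀ k : ℕ,
    (ascPochhammer ℚ k).eval (1/2 : ℚ) = ((2*k)! : ℚ) / (4^k * (k)!) := by
  intro k
  induction k with
  | zero => simp
  | succ k ih =>
    rw [ascPochhammer_succ_eval, ih]
    have h1 : 2*(k+1) = (2*k+1)+1 := by ring
    rw [h1, Nat.factorial_succ, Nat.factorial_succ, Nat.factorial_succ]
    push_cast
    have h4 : ((4:ℚ))^k ≠ 0 := by positivity
    have := factQ_ne k
    have := factQ_ne (2*k)
    field_simp
    ring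

lemma poch_two : ∀ k : ℕ,
    (ascPochhammer ℚ k).eval (2 : ℚ) = ((k+1)! : ℚ) := by
  intro k
  induction k with
  | zero => simp
  | succ k ih =>
    rw [ascPochhammer_succ_eval, ih]
    simp only [Nat.factorial_succ]
    push_cast
    ring

lemma poch_neg_half (n : ℕ) : ∀ k : ℕ, k ≤ 2*n →
    (ascPochhammer ℚ k).eval (-(2*(n:ℚ)) + 1/2) =
      (-1)^k * ((4*n)! : ℚ) * ((2*n-k)! : ℚ) / (((4*n-2*k)! : ℚ) * ((2*n)! : ℚ) * 4^k) := by
  intro k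
  induction k with
  | zero =>
    intro _
    simp only [ascPochhammer_zero, Polynomial.eval_one, Nat.sub_zero, Nat.mul_zero, pow_zero,
      one_mul, mul_one]
    rw [div_self (by exact mul_ne_zero (factQ_ne _) (factQ_ne _))]
  | succ k ih =>
    intro hk
    rw [ascPochhammer_succ_eval, ih (by omega)]
    have h1 : 2*n - k = (2*n - (k+1)) + 1 := by omega
    have h2 : 4*n - 2*k = (4*n - 2*(k+1)) + 1 + 1 := by omega
    have h3 : ((2*n - (k+1) : ℕ) : ℚ) = 2*(n:ℚ) - (k:ℚ) - 1 := by
      push_cast [Nat.cast_sub (show k+1 ≤ 2*n from hk)]; ring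
    have h4 : ((4*n - 2*(k+1) : ℕ) : ℚ) = 4*(n:ℚ) - 2*(k:ℚ) - 2 := by
      push_cast [Nat.cast_sub (show 2*(k+1) ≤ 4*n by omega)]; ring
    rw [h1, h2]
    simp only [Nat.factorial_succ]
    push_cast
    have := factQ_ne (2*n - (k+1))
    have := factQ_ne (4*n - 2*(k+1))
    have := factQ_ne (2*n)
    have h5 : ((4:ℚ))^k ≠ 0 := by positivity
    have hp1 : ((2*n - (k+1) : ℕ) : ℚ) + 1 ≠ 0 := by positivity
    have hp2 : ((4*n - 2*(k+1) : ℕ) : ℚ) + 1 ≠ 0 := by positivity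
    have hp3 : ((4*n - 2*(k+1) : ℕ) : ℚ) + 1 + 1 ≠ 0 := by positivity
    have hp4 : ((2:ℚ)*n - (↑k+1) + 1) ≠ 0 := by
      have : (k:ℚ) < 2*n := by exact_mod_cast hk
      intro h; linarith [h]
    field_simp
    simp only [h3, h4]
    ring


lemma fact_shift (a j : ℕ) : ((a+j)! : ℚ) = ((a)! : ℚ) * ∏ i ∈ Finset.range j, ((a:ℚ)+i+1) := by
  induction j with
  | zero => simp
  | succ j ih =>
    rw [show a+(j+1) = (a+j)+1 from rfl, Nat.factorial_succ, Finset.prod_range_succ]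
    push_cast [ih]
    ring

lemma HQ_zero (n : ℕ) : HQ n 0 = 0 := by simp [HQ]

lemma wz_local (n k d : ℕ) (hd : 2*n = k+1+d) :
    ((n:ℚ)+1)^2 * tQ (n+1) k - 4*(2*(n:ℚ)+1)*(2*(n:ℚ)+3) * tQ n k = HQ n (k+1) - HQ n k := by
  simp only [tQ, HQ]
  rw [show 4*(n+1)-2*k = 2*d+6 from by omega,
      show 2*(n+1)-k = d+3 from by omega,
      show 2*(n+1)+1-k = d+4 from by omega,
      show 2*(n+1)+2 = k+d+5 from by omega,
      show 4*n-2*(k+1) = 2*d from by omega,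
      show 2*(k+1) = 2*k+2 from by omega,
      show 2*n-(k+1) = d from by omega,
      show 2*n+2-(k+1) = d+2 from by omega,
      show 2*n+3-(k+1) = d+3 from by omega,
      show 2*n+2-k = d+3 from by omega,
      show 2*n+3-k = d+4 from by omega,
      show 4*n-2*k = 2*d+2 from by omega,
      show 2*n-k = d+1 from by omega,
      show 2*n+1-k = d+2 from by omega,
      show 2*n+2 = k+d+3 from by omega]
  rw [fact_shift (2*d) 6, fact_shift (k+d) 5, fact_shift d 3, fact_shift d 4,
      fact_shift (2*k) 2, fact_shift d 2, fact_shift (2*d) 2, fact_shift d 1,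
      fact_shift (k+d) 3, fact_shift k 1]
  simp only [Finset.prod_range_succ, Finset.prod_range_zero, one_mul, pow_succ]
  push_cast
  have h2n : 2*(n:ℚ) = (k:ℚ)+1+(d:ℚ) := by exact_mod_cast hd
  have hnq : (n:ℚ) = ((k:ℚ)+(d:ℚ)+1)/2 := by linarith
  rw [hnq]
  have n1 : ((k)! : ℚ) ≠ 0 := factQ_ne _
  have n2 : ((2*k)! : ℚ) ≠ 0 := factQ_ne _
  have n3 : ((d)! : ℚ) ≠ 0 := factQ_ne _
  have n4 : ((2*d)! : ℚ) ≠ 0 := factQ_ne _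
  have n5 : (((k+d))! : ℚ) ≠ 0 := factQ_ne _
  have p1 : ((k:ℚ)+1) ≠ 0 := by positivity
  have p2 : ((d:ℚ)+1) ≠ 0 := by positivity
  have p3 : ((d:ℚ)+2) ≠ 0 := by positivity
  have p4 : ((d:ℚ)+3) ≠ 0 := by positivity
  have p5 : ((d:ℚ)+4) ≠ 0 := by positivity
  field_simp
  ring


lemma wz_boundary (n : ℕ) :
    HQ n (2*n) + (((n:ℚ)+1)^2 * tQ (n+1) (2*n) - 4*(2*(n:ℚ)+1)*(2*(n:ℚ)+3) * tQ n (2*n))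
      + ((n:ℚ)+1)^2 * (tQ (n+1) (2*n+1) + tQ (n+1) (2*n+2)) = 0 := by
  simp only [tQ, HQ]
  rw [show 4*(n+1)-2*(2*n+2) = 0 from by omega,
      show 2*(n+1)-(2*n+2) = 0 from by omega,
      show 2*(n+1)+1-(2*n+2) = 1 from by omega,
      show 4*(n+1)-2*(2*n+1) = 2 from by omega,
      show 2*(n+1)-(2*n+1) = 1 from by omega,
      show 2*(n+1)+1-(2*n+1) = 2 from by omega,
      show 4*(n+1)-2*(2*n) = 4 from by omega,
      show 2*(n+1)-2*n = 2 from by omega,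
      show 2*(n+1)+1-2*n = 3 from by omega,
      show 4*n-2*(2*n) = 0 from by omega,
      show 2*n-2*n = 0 from by omega,
      show 2*n+1-2*n = 1 from by omega,
      show 2*n+2-2*n = 2 from by omega,
      show 2*n+3-2*n = 3 from by omega,
      show 2*(2*n+2) = 4*n+4 from by omega,
      show 2*(2*n+1) = 4*n+2 from by omega,
      show 2*(2*n) = 4*n from by omega,
      show 2*(n+1)+2 = 2*n+4 from by omega,
      show 2*n+1+1 = 2*n+2 from by omega,
      show 2*n+2+1 = 2*n+3 from by omega]
  rw [fact_shift (4*n) 4, fact_shift (4*n) 2, fact_shift (2*n) 4, fact_shift (2*n) 3,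
      fact_shift (2*n) 2, fact_shift (2*n) 1]
  rw [show (4:ℕ)! = 24 from rfl, show (3:ℕ)! = 6 from rfl, show (2:ℕ)! = 2 from rfl,
      show (1:ℕ)! = 1 from rfl, show (0:ℕ)! = 1 from rfl]
  have hs : ((-1:ℚ))^(2*n) = 1 := by rw [pow_mul]; norm_num
  rw [show 2*n+2 = 2*n+1+1 from by omega]
  simp only [Finset.prod_range_succ, Finset.prod_range_zero, one_mul, pow_succ, hs]
  push_cast
  have n1 : ((2*n)! : ℚ) ≠ 0 := factQ_ne _
  have n2 : ((4*n)! : ℚ) ≠ 0 := factQ_ne _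
  have q1 : 2*(n:ℚ)+1 ≠ 0 := by positivity
  have q2 : 2*(n:ℚ)+2 ≠ 0 := by positivity
  have q3 : 2*(n:ℚ)+3 ≠ 0 := by positivity
  have q4 : 2*(n:ℚ)+4 ≠ 0 := by positivity
  have q5 : 4*(n:ℚ)+1 ≠ 0 := by positivity
  have q6 : 4*(n:ℚ)+2 ≠ 0 := by positivity
  have q7 : 4*(n:ℚ)+3 ≠ 0 := by positivity
  have q8 : 4*(n:ℚ)+4 ≠ 0 := by positivity
  field_simp
  ring

lemma w_rec (n : ℕ) : ((n:ℚ)+1)^2 * WQ (n+1) = 4*(2*(n:ℚ)+1)*(2*(n:ℚ)+3) * WQ n := by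
  simp only [WQ]
  rw [show 2*(n+1)+2 = 2*n+4 from by omega,
      show 2*(n+1) = 2*n+2 from by omega,
      show n+1+1 = n+2 from by omega]
  rw [fact_shift (2*n) 4, fact_shift (2*n) 2, fact_shift n 2, fact_shift n 1]
  simp only [Finset.prod_range_succ, Finset.prod_range_zero, one_mul]
  push_cast
  have n1 : ((2*n)! : ℚ) ≠ 0 := factQ_ne _
  have n2 : ((n)! : ℚ) ≠ 0 := factQ_ne _
  have q1 : (n:ℚ)+1 ≠ 0 := by positivity
  have q2 : (n:ℚ)+2 ≠ 0 := by positivity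
  field_simp
  ring

lemma sum_tQ : ∀ n : ℕ, ∑ k ∈ Finset.range (2*n+1), tQ n k = WQ n := by
  intro n
  induction n with
  | zero =>
    rw [show 2*0+1 = 1 from rfl, Finset.sum_range_one]
    simp only [tQ, WQ]
    norm_num [show (2:ℕ)! = 2 from rfl, show (0:ℕ)! = 1 from rfl, show (1:ℕ)! = 1 from rfl]
  | succ n IH =>
    have local_sum : ∑ k ∈ Finset.range (2*n),
        (((n:ℚ)+1)^2 * tQ (n+1) k - 4*(2*(n:ℚ)+1)*(2*(n:ℚ)+3) * tQ n k) = HQ n (2*n) := by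
      have tele := Finset.sum_range_sub (HQ n) (2*n)
      have congr1 : ∑ k ∈ Finset.range (2*n),
          (((n:ℚ)+1)^2 * tQ (n+1) k - 4*(2*(n:ℚ)+1)*(2*(n:ℚ)+3) * tQ n k)
          = ∑ k ∈ Finset.range (2*n), (HQ n (k+1) - HQ n k) := by
        refine Finset.sum_congr rfl ?_
        intro k hk
        rw [Finset.mem_range] at hk
        exact wz_local n k (2*n-k-1) (by omega)
      rw [congr1, tele, HQ_zero, sub_zero]
    have hA : ((n:ℚ)+1)^2 * (∑ k ∈ Finset.range (2*n+1), tQ (n+1) k)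
        - 4*(2*(n:ℚ)+1)*(2*(n:ℚ)+3) * WQ n
        = HQ n (2*n) + (((n:ℚ)+1)^2 * tQ (n+1) (2*n)
            - 4*(2*(n:ℚ)+1)*(2*(n:ℚ)+3) * tQ n (2*n)) := by
      rw [← IH, Finset.mul_sum, Finset.mul_sum, ← Finset.sum_sub_distrib,
        Finset.sum_range_succ, local_sum]
    have hb := wz_boundary n
    have hrec := w_rec n
    have hP : ((n:ℚ)+1)^2 ≠ 0 := by positivity
    have hsplit : ∑ k ∈ Finset.range (2*(n+1)+1), tQ (n+1) k
        = (∑ k ∈ Finset.range (2*n+1), tQ (n+1) k) + tQ (n+1) (2*n+1) + tQ (n+1) (2*n+2) := by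
      rw [show 2*(n+1)+1 = (2*n+1)+1+1 from by omega, Finset.sum_range_succ,
        Finset.sum_range_succ, show 2*n+1+1 = 2*n+2 from by omega]
    rw [hsplit]
    apply mul_left_cancel₀ hP
    linear_combination hA + hb - hrec


lemma term_eq (n k : ℕ) (hk : k ≤ 2*n) :
    ((ascPochhammer ℚ k).eval (-(2 * n : ℚ)) * (ascPochhammer ℚ k).eval (-(2 * n : ℚ) - 1) *
        (ascPochhammer ℚ k).eval (1 / 2)) /
      ((ascPochhammer ℚ k).eval (-(2 * n : ℚ) + 1 / 2) * (ascPochhammer ℚ k).eval 2 *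
        (Nat.factorial k)) =
    (((2*n)! : ℚ)^2 * ((2*n+1)! : ℚ) / (((4*n)! : ℚ) * ((2*n+2)! : ℚ))) * tQ n k := by
  rw [poch_neg_half n k hk, poch_half, poch_two]
  rw [show (-(2 * (n:ℚ))) = -(((2*n : ℕ)) : ℚ) from by push_cast; ring]
  rw [show (-(((2*n : ℕ)) : ℚ) - 1) = -(((2*n+1 : ℕ)) : ℚ) from by push_cast; ring]
  rw [poch_neg (2*n) k hk, poch_neg (2*n+1) k (by omega)]
  obtain ⟨d, hd⟩ : ∃ d, 2*n = k + d := ⟨2*n-k, by omega⟩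
  simp only [tQ]
  rw [show 2*n-k = d from by omega,
      show 2*n+1-k = d+1 from by omega,
      show 4*n-2*k = 2*d from by omega,
      show 2*n+2 = k+d+2 from by omega,
      show 2*n+1 = k+d+1 from by omega,
      show 2*n = k+d from by omega]
  rw [fact_shift (k+d) 2, fact_shift (k+d) 1, fact_shift d 1, fact_shift k 1]
  simp only [Finset.prod_range_succ, Finset.prod_range_zero, one_mul]
  push_cast
  have n1 : ((k)! : ℚ) ≠ 0 := factQ_ne _
  have n2 : ((2*k)! : ℚ) ≠ 0 := factQ_ne _
  have n3 : ((d)! : ℚ) ≠ 0 := factQ_ne _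
  have n4 : ((2*d)! : ℚ) ≠ 0 := factQ_ne _
  have n5 : (((k+d))! : ℚ) ≠ 0 := factQ_ne _
  have n6 : (((4*n))! : ℚ) ≠ 0 := factQ_ne _
  have h4 : ((4:ℚ))^k ≠ 0 := by positivity
  have hsgn : ((-1:ℚ))^k ≠ 0 := pow_ne_zero _ (by norm_num)
  have p1 : ((k:ℚ)+1) ≠ 0 := by positivity
  have p2 : ((d:ℚ)+1) ≠ 0 := by positivity
  have p3 : ((k:ℚ)+(d:ℚ)+1) ≠ 0 := by positivity
  have p4 : ((k:ℚ)+(d:ℚ)+2) ≠ 0 := by positivity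
  field_simp

theorem stmt_14 (n : ℕ) (hn : 1 ≤ n) :
    ∑ k ∈ Finset.range (2 * n + 1),
      ((ascPochhammer ℚ k).eval (-(2 * n : ℚ)) * (ascPochhammer ℚ k).eval (-(2 * n : ℚ) - 1) *
        (ascPochhammer ℚ k).eval (1 / 2)) /
      ((ascPochhammer ℚ k).eval (-(2 * n : ℚ) + 1 / 2) * (ascPochhammer ℚ k).eval 2 *
        (Nat.factorial k)) =
    ((Nat.factorial (2 * n + 1) : ℚ) * (Nat.factorial (2 * n) : ℚ) ^ 3) /
      ((Nat.factorial (4 * n) : ℚ) * (Nat.factorial n : ℚ) ^ 3 * (Nat.factorial (n + 1) : ℚ)) := by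
  have hterms : ∑ k ∈ Finset.range (2 * n + 1),
      ((ascPochhammer ℚ k).eval (-(2 * n : ℚ)) * (ascPochhammer ℚ k).eval (-(2 * n : ℚ) - 1) *
        (ascPochhammer ℚ k).eval (1 / 2)) /
      ((ascPochhammer ℚ k).eval (-(2 * n : ℚ) + 1 / 2) * (ascPochhammer ℚ k).eval 2 *
        (Nat.factorial k))
      = ∑ k ∈ Finset.range (2 * n + 1),
        (((2*n)! : ℚ)^2 * ((2*n+1)! : ℚ) / (((4*n)! : ℚ) * ((2*n+2)! : ℚ))) * tQ n k := by
    refine Finset.sum_congr rfl ?_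
    intro k hk
    rw [Finset.mem_range] at hk
    exact term_eq n k (by omega)
  rw [hterms, ← Finset.mul_sum, sum_tQ n]
  simp only [WQ]
  rw [fact_shift (2*n) 2, fact_shift (2*n) 1, fact_shift n 1]
  simp only [Finset.prod_range_succ, Finset.prod_range_zero, one_mul]
  push_cast
  have n1 : ((n)! : ℚ) ≠ 0 := factQ_ne _
  have n2 : ((2*n)! : ℚ) ≠ 0 := factQ_ne _
  have n3 : ((4*n)! : ℚ) ≠ 0 := factQ_ne _
  have p1 : ((n:ℚ)+1) ≠ 0 := by positivity
  have p2 : (2*(n:ℚ)+1) ≠ 0 := by positivity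
  have p3 : (2*(n:ℚ)+2) ≠ 0 := by positivity
  field_simp
  ring
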